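/- For integers L ≥ 1, d ≥ 1, and nonnegative integers χ₀,…,χ_L with ∑χᵢ = χ, the sum over compositions d₀+⋯+d_L = d of ∏_{dᵢ≠0} dᵢ^{χᵢ-2} is at most 8^L·d^{χ-2}, where negative exponents denote real powers of positive integers. -/

import Mathlib

open Finset

lemma aux_zpow_neg2 (x : ℝ) : x ^ (-2 : ℤ) = (x ^ 2)⁻¹ := by
  rw [zpow_neg, zpow_two, pow_two]

/-- Partial sums of `∑ 1/i²` are bounded by `2 - 1/(n+1)`. -/
lemma aux_invsq_aux : ∀ n : ℕ, ∑ i ∈ Finset.Ico 1 (n + 2), ((i : ℝ) ^ 2)⁻¹ ≤ 2 - ((n : ℝ) + 1)⁻¹ := by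
  intro n
  induction n with
  | zero => norm_num
  | succ m ih =>
      rw [show m + 1 + 2 = (m + 2) + 1 from rfl, Finset.sum_Ico_succ_top (by omega)]
      have key : (((m + 2 : ℕ) : ℝ) ^ 2)⁻¹ ≤ ((m : ℝ) + 1)⁻¹ - ((m : ℝ) + 1 + 1)⁻¹ := by
        have h1 : (0:ℝ) < (m:ℝ) + 1 := by positivity
        have h2 : (0:ℝ) < (m:ℝ) + 2 := by positivity
        have heq : ((m : ℝ) + 1)⁻¹ - ((m : ℝ) + 1 + 1)⁻¹ = (((m:ℝ) + 1) * ((m:ℝ) + 2))⁻¹ := by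
          rw [inv_sub_inv (ne_of_gt h1) (by positivity : ((m:ℝ) + 1 + 1) ≠ 0),
            show ((m:ℝ) + 1 + 1) - ((m:ℝ) + 1) = 1 from by ring, one_div]
          ring_nf
        rw [heq]
        push_cast
        apply inv_anti₀ (by positivity)
        nlinarith
      push_cast at *
      linarith

/-- `∑_{i=1}^{d-1} 1/i² ≤ 2`. -/
lemma aux_invsq (d : ℕ) : ∑ i ∈ Finset.Ico 1 d, ((i : ℝ) ^ 2)⁻¹ ≤ 2 := by
  match d with
  | 0 => simp
  | 1 => simp
  | (n + 2) =>
      have h := aux_invsq_aux n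
      have h2 : (0:ℝ) ≤ ((n : ℝ) + 1)⁻¹ := by positivity
      linarith

/-- Harmonic bound: `∑_{i=1}^{n+1} 1/i ≤ (n+2)/2`. -/
lemma aux_harm : ∀ n : ℕ, ∑ i ∈ Finset.Ico 1 (n + 2), ((i : ℝ))⁻¹ ≤ ((n : ℝ) + 2) / 2 := by
  intro n
  induction n with
  | zero => norm_num
  | succ m ih =>
      rw [show m + 1 + 2 = (m + 2) + 1 from rfl, Finset.sum_Ico_succ_top (by omega)]
      have h2 : (0:ℝ) < (m:ℝ) + 2 := by positivity
      have hkey : (((m + 2 : ℕ):ℝ))⁻¹ ≤ 1 / 2 := by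
        push_cast
        rw [inv_le_iff_one_le_mul₀ (by positivity)]
        nlinarith
      push_cast at *
      linarith

/-- Reflection of a sum over `Ico 1 d`. -/
lemma aux_reflect (d : ℕ) (g : ℕ → ℝ) :
    ∑ i ∈ Finset.Ico 1 d, g (d - i) = ∑ i ∈ Finset.Ico 1 d, g i := by
  apply Finset.sum_nbij' (fun i => d - i) (fun i => d - i)
  · intro a ha; simp only [Finset.mem_Ico] at *; omega
  · intro a ha; simp only [Finset.mem_Ico] at *; omega
  · intro a ha; simp only [Finset.mem_Ico] at *; omega
  · intro a ha; simp only [Finset.mem_Ico] at *; omega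
  · intro a ha; simp only [Finset.mem_Ico] at ha
    congr 1

/-- The key elementary inequality `∑_{i=1}^{d-1} 1/(i²(d-i)²) ≤ 6/d²`. -/
lemma aux_key (d : ℕ) (hd : 1 ≤ d) :
    ∑ i ∈ Finset.Ico 1 d, ((i : ℝ) ^ 2)⁻¹ * (((d - i : ℕ) : ℝ) ^ 2)⁻¹ ≤ 6 / (d : ℝ) ^ 2 := by
  have hd0 : (0:ℝ) < (d:ℝ) := by exact_mod_cast hd
  have hsplit : ∀ i ∈ Finset.Ico 1 d,
      ((i : ℝ) ^ 2)⁻¹ * (((d - i : ℕ) : ℝ) ^ 2)⁻¹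
        = ((d:ℝ)^2)⁻¹ * (((i : ℝ) ^ 2)⁻¹ + (((d - i : ℕ) : ℝ) ^ 2)⁻¹)
          + 2 * ((d:ℝ)^3)⁻¹ * (((i:ℝ))⁻¹ + (((d - i : ℕ):ℝ))⁻¹) := by
    intro i hi
    simp only [Finset.mem_Ico] at hi
    have hx : (0:ℝ) < (i:ℝ) := by exact_mod_cast hi.1
    have hcast : ((d - i : ℕ) : ℝ) = (d:ℝ) - (i:ℝ) := by
      have := Nat.cast_sub (le_of_lt hi.2) (R := ℝ)
      exact this
    have hiltd : (i:ℝ) < (d:ℝ) := by exact_mod_cast hi.2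
    rw [hcast]
    have hx' : (i:ℝ) ≠ 0 := ne_of_gt hx
    have hy' : (d:ℝ) - (i:ℝ) ≠ 0 := by intro h; nlinarith
    have hd' : (d:ℝ) ≠ 0 := ne_of_gt hd0
    field_simp
    ring
  rw [Finset.sum_congr rfl hsplit]
  rw [Finset.sum_add_distrib, ← Finset.mul_sum, ← Finset.mul_sum]
  rw [Finset.sum_add_distrib, Finset.sum_add_distrib]
  rw [aux_reflect d (fun j => ((j:ℝ)^2)⁻¹), aux_reflect d (fun j => ((j:ℝ))⁻¹)]
  have hA : ∑ i ∈ Finset.Ico 1 d, ((i : ℝ) ^ 2)⁻¹ ≤ 2 := aux_invsq d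
  have hAnn : (0:ℝ) ≤ ∑ i ∈ Finset.Ico 1 d, ((i : ℝ) ^ 2)⁻¹ :=
    Finset.sum_nonneg fun i _ => by positivity
  have hB : ∑ i ∈ Finset.Ico 1 d, ((i : ℝ))⁻¹ ≤ (d : ℝ) / 2 := by
    match d with
    | 1 => norm_num
    | (n + 2) =>
        have := aux_harm n
        push_cast at *
        linarith
  have h1 : ((d:ℝ)^2)⁻¹ * (∑ i ∈ Finset.Ico 1 d, ((i : ℝ) ^ 2)⁻¹
      + ∑ i ∈ Finset.Ico 1 d, ((i : ℝ) ^ 2)⁻¹) ≤ ((d:ℝ)^2)⁻¹ * 4 := by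
    apply mul_le_mul_of_nonneg_left (by linarith) (by positivity)
  have h2 : 2 * ((d:ℝ)^3)⁻¹ * (∑ i ∈ Finset.Ico 1 d, ((i : ℝ))⁻¹
      + ∑ i ∈ Finset.Ico 1 d, ((i : ℝ))⁻¹) ≤ 2 * ((d:ℝ)^3)⁻¹ * ((d:ℝ)) := by
    apply mul_le_mul_of_nonneg_left (by linarith) (by positivity)
  have h3 : 2 * ((d:ℝ)^3)⁻¹ * ((d:ℝ)) = 2 * ((d:ℝ)^2)⁻¹ := by
    field_simp
  calc ((d:ℝ)^2)⁻¹ * (∑ i ∈ Finset.Ico 1 d, ((i : ℝ) ^ 2)⁻¹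
          + ∑ i ∈ Finset.Ico 1 d, ((i : ℝ) ^ 2)⁻¹)
        + 2 * ((d:ℝ)^3)⁻¹ * (∑ i ∈ Finset.Ico 1 d, ((i : ℝ))⁻¹
          + ∑ i ∈ Finset.Ico 1 d, ((i : ℝ))⁻¹)
      ≤ ((d:ℝ)^2)⁻¹ * 4 + 2 * ((d:ℝ)^2)⁻¹ := by
        rw [← h3]
        exact add_le_add h1 h2
    _ = 6 / (d:ℝ)^2 := by
        field_simp
        ring

/-- Decomposition of a sum over `antidiagonalTuple (k+1)` along the first coordinate. -/
lemma aux_sum_adt_succ {M : Type*} [AddCommMonoid M] (k n : ℕ) (g : (Fin (k + 1) → ℕ) → M) :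
    ∑ f ∈ Finset.Nat.antidiagonalTuple (k + 1) n, g f
      = ∑ p ∈ Finset.HasAntidiagonal.antidiagonal n,
          ∑ t ∈ Finset.Nat.antidiagonalTuple k p.2, g (Fin.cons p.1 t) := by
  rw [Finset.sum_sigma' (Finset.HasAntidiagonal.antidiagonal n)
    (fun p => Finset.Nat.antidiagonalTuple k p.2) (fun p t => g (Fin.cons p.1 t))]
  symm
  apply Finset.sum_nbij' (fun x => Fin.cons x.1.1 x.2)
      (fun f => (⟨(f 0, ∑ i, Fin.tail f i), Fin.tail f⟩ :
        (p : ℕ × ℕ) × (Fin k → ℕ)))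
  · rintro ⟨⟨a, b⟩, t⟩ hx
    rw [Finset.mem_sigma, Finset.HasAntidiagonal.mem_antidiagonal, Finset.Nat.mem_antidiagonalTuple] at hx
    rw [Finset.Nat.mem_antidiagonalTuple, Fin.sum_cons, hx.2, hx.1]
  · intro f hf
    rw [Finset.Nat.mem_antidiagonalTuple] at hf
    rw [Finset.mem_sigma]
    constructor
    · rw [Finset.HasAntidiagonal.mem_antidiagonal]
      show f 0 + ∑ i, Fin.tail f i = n
      rw [← hf, Fin.sum_univ_succ]
      rfl
    · rw [Finset.Nat.mem_antidiagonalTuple]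
  · rintro ⟨⟨a, b⟩, t⟩ hx
    rw [Finset.mem_sigma, Finset.HasAntidiagonal.mem_antidiagonal, Finset.Nat.mem_antidiagonalTuple] at hx
    have h1 : Fin.cons (α := fun _ => ℕ) a t 0 = a := rfl
    have h2 : Fin.tail (Fin.cons (α := fun _ => ℕ) a t) = t := by
      ext i
      simp [Fin.tail]
    simp only [h1, h2, hx.2]
  · intro f hf
    exact Fin.cons_self_tail f
  · rintro ⟨⟨a, b⟩, t⟩ hx
    rfl

/-- The product appearing in the core estimate. -/
noncomputable def auxP {m : ℕ} (f : Fin m → ℕ) : ℝ :=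
  ∏ i ∈ Finset.univ.filter (fun i => f i ≠ 0), ((f i : ℝ)) ^ (-2 : ℤ)

lemma auxP_nonneg {m : ℕ} (f : Fin m → ℕ) : 0 ≤ auxP f := by
  apply Finset.prod_nonneg
  intro i _
  positivity

lemma auxP_cons {k : ℕ} (a : ℕ) (t : Fin k → ℕ) :
    auxP (Fin.cons a t) = (if a ≠ 0 then ((a : ℝ)) ^ (-2 : ℤ) else 1) * auxP t := by
  unfold auxP
  rw [Finset.prod_filter, Finset.prod_filter, Fin.prod_univ_succ]
  simp only [Fin.cons_zero, Fin.cons_succ]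

lemma aux_sum_adt_zero (k : ℕ) :
    ∑ f ∈ Finset.Nat.antidiagonalTuple k 0, auxP f = 1 := by
  rw [Finset.Nat.antidiagonalTuple_zero_right, Finset.sum_singleton]
  unfold auxP
  rw [Finset.prod_eq_one]
  intro i hi
  simp at hi

/-- Core estimate: `∑ over compositions of ∏ dᵢ^{-2} ≤ 8^k / d²`. -/
lemma aux_core : ∀ k : ℕ, ∀ d : ℕ, 1 ≤ d →
    ∑ f ∈ Finset.Nat.antidiagonalTuple (k + 1) d, auxP f ≤ 8 ^ k / (d : ℝ) ^ 2 := by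
  intro k
  induction k with
  | zero =>
      intro d hd
      rw [Finset.Nat.antidiagonalTuple_one, Finset.sum_singleton]
      unfold auxP
      have hd0 : d ≠ 0 := by omega
      have hdR : (0:ℝ) < (d:ℝ) := by exact_mod_cast hd
      rw [show (Finset.univ.filter (fun i : Fin 1 => ![d] i ≠ 0)) = Finset.univ from by
        ext i; fin_cases i <;> simp [hd0]]
      rw [Fin.prod_univ_one]
      simp only [Matrix.cons_val_zero, pow_zero]
      rw [aux_zpow_neg2, one_div]
  | succ k ih =>
      intro d hd
      have hdR : (0:ℝ) < (d:ℝ) := by exact_mod_cast hd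
      rw [aux_sum_adt_succ]
      have hterm : ∀ p : ℕ × ℕ,
          ∑ t ∈ Finset.Nat.antidiagonalTuple (k + 1) p.2, auxP (Fin.cons p.1 t)
            = (if p.1 ≠ 0 then ((p.1 : ℝ)) ^ (-2 : ℤ) else 1)
              * ∑ t ∈ Finset.Nat.antidiagonalTuple (k + 1) p.2, auxP t := by
        intro p
        rw [Finset.mul_sum]
        exact Finset.sum_congr rfl (fun t _ => auxP_cons p.1 t)
      rw [Finset.sum_congr rfl (fun p _ => hterm p)]
      rw [Finset.Nat.sum_antidiagonal_eq_sum_range_succ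
        (fun a b => (if a ≠ 0 then ((a : ℝ)) ^ (-2 : ℤ) else 1)
          * ∑ t ∈ Finset.Nat.antidiagonalTuple (k + 1) b, auxP t)]
      rw [Finset.sum_range_succ]
      rw [Finset.range_eq_Ico, Finset.sum_eq_sum_Ico_succ_bot (by omega : 0 < d)]
      have piece0 : (if (0:ℕ) ≠ 0 then ((0 : ℕ) : ℝ) ^ (-2 : ℤ) else 1)
          * ∑ t ∈ Finset.Nat.antidiagonalTuple (k + 1) (d - 0), auxP t
            ≤ 8 ^ k / (d : ℝ) ^ 2 := by
        simp only [ne_eq, not_true_eq_false, ite_false, one_mul, Nat.sub_zero]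
        exact ih d hd
      have pieced : (if d ≠ 0 then ((d : ℝ)) ^ (-2 : ℤ) else 1)
          * ∑ t ∈ Finset.Nat.antidiagonalTuple (k + 1) (d - d), auxP t
            ≤ 1 / (d : ℝ) ^ 2 := by
        rw [if_pos (by omega), Nat.sub_self, aux_sum_adt_zero, mul_one, aux_zpow_neg2, one_div]
      have piecemid : ∑ i ∈ Finset.Ico 1 d,
          (if i ≠ 0 then ((i : ℝ)) ^ (-2 : ℤ) else 1)
            * ∑ t ∈ Finset.Nat.antidiagonalTuple (k + 1) (d - i), auxP t
          ≤ 8 ^ k * (6 / (d : ℝ) ^ 2) := by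
        have step : ∀ i ∈ Finset.Ico 1 d,
            (if i ≠ 0 then ((i : ℝ)) ^ (-2 : ℤ) else 1)
              * ∑ t ∈ Finset.Nat.antidiagonalTuple (k + 1) (d - i), auxP t
            ≤ 8 ^ k * (((i : ℝ) ^ 2)⁻¹ * (((d - i : ℕ) : ℝ) ^ 2)⁻¹) := by
          intro i hi
          simp only [Finset.mem_Ico] at hi
          rw [if_pos (by omega)]
          have h1 : (1:ℕ) ≤ d - i := by omega
          have hiR : (0:ℝ) ≤ ((i:ℝ)) ^ (-2:ℤ) := by positivity
          calc ((i : ℝ)) ^ (-2 : ℤ)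
                * ∑ t ∈ Finset.Nat.antidiagonalTuple (k + 1) (d - i), auxP t
              ≤ ((i : ℝ)) ^ (-2 : ℤ) * (8 ^ k / ((d - i : ℕ) : ℝ) ^ 2) :=
                mul_le_mul_of_nonneg_left (ih (d - i) h1) hiR
            _ = 8 ^ k * (((i : ℝ) ^ 2)⁻¹ * (((d - i : ℕ) : ℝ) ^ 2)⁻¹) := by
                rw [aux_zpow_neg2, div_eq_mul_inv]
                ring
        calc ∑ i ∈ Finset.Ico 1 d,
              (if i ≠ 0 then ((i : ℝ)) ^ (-2 : ℤ) else 1)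
                * ∑ t ∈ Finset.Nat.antidiagonalTuple (k + 1) (d - i), auxP t
            ≤ ∑ i ∈ Finset.Ico 1 d,
                8 ^ k * (((i : ℝ) ^ 2)⁻¹ * (((d - i : ℕ) : ℝ) ^ 2)⁻¹) :=
              Finset.sum_le_sum step
          _ = 8 ^ k * ∑ i ∈ Finset.Ico 1 d,
                (((i : ℝ) ^ 2)⁻¹ * (((d - i : ℕ) : ℝ) ^ 2)⁻¹) := by
              rw [Finset.mul_sum]
          _ ≤ 8 ^ k * (6 / (d : ℝ) ^ 2) :=
              mul_le_mul_of_nonneg_left (aux_key d hd) (by positivity)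
      have h8 : (1:ℝ) ≤ 8 ^ k := one_le_pow₀ (by norm_num)
      calc _ ≤ 8 ^ k / (d : ℝ) ^ 2 + 8 ^ k * (6 / (d : ℝ) ^ 2) + 1 / (d : ℝ) ^ 2 :=
            add_le_add (add_le_add piece0 piecemid) pieced
        _ = (7 * 8 ^ k + 1) / (d : ℝ) ^ 2 := by
            field_simp
            ring
        _ ≤ 8 ^ (k + 1) / (d : ℝ) ^ 2 := by
            gcongr
            rw [pow_succ]
            nlinarith

theorem stmt_16 (L d : ℕ) (hL : 1 ≤ L) (hd : 1 ≤ d) (χ : Fin (L + 1) → ℕ) :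
    ∑ f ∈ Finset.Nat.antidiagonalTuple (L + 1) d,
        ∏ i ∈ Finset.univ.filter (fun i => f i ≠ 0), (f i : ℝ) ^ ((χ i : ℤ) - 2)
      ≤ 8 ^ L * (d : ℝ) ^ ((∑ i, χ i : ℤ) - 2) := by
  have hdR : (0:ℝ) < (d:ℝ) := by exact_mod_cast hd
  have hdne : (d:ℝ) ≠ 0 := ne_of_gt hdR
  have point : ∀ f ∈ Finset.Nat.antidiagonalTuple (L + 1) d,
      ∏ i ∈ Finset.univ.filter (fun i => f i ≠ 0), (f i : ℝ) ^ ((χ i : ℤ) - 2)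
        ≤ (d : ℝ) ^ (∑ i, χ i) * auxP f := by
    intro f hf
    rw [Finset.Nat.mem_antidiagonalTuple] at hf
    have hle : ∀ i, f i ≤ d := by
      intro i
      rw [← hf]
      exact Finset.single_le_sum (fun j _ => Nat.zero_le _) (Finset.mem_univ i)
    have split : ∀ i ∈ Finset.univ.filter (fun i => f i ≠ 0),
        (f i : ℝ) ^ ((χ i : ℤ) - 2) = (f i : ℝ) ^ (χ i) * (f i : ℝ) ^ (-2 : ℤ) := by
      intro i hi
      simp only [Finset.mem_filter] at hi
      have hfi : (f i : ℝ) ≠ 0 := by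
        simp only [ne_eq, Nat.cast_eq_zero]
        exact hi.2
      rw [show ((χ i : ℤ) - 2) = (χ i : ℤ) + (-2) from by ring,
        zpow_add₀ hfi, zpow_natCast]
    rw [Finset.prod_congr rfl split, Finset.prod_mul_distrib]
    unfold auxP
    have hfirst : ∏ i ∈ Finset.univ.filter (fun i => f i ≠ 0), (f i : ℝ) ^ (χ i)
        ≤ (d : ℝ) ^ (∑ i, χ i) := by
      calc ∏ i ∈ Finset.univ.filter (fun i => f i ≠ 0), (f i : ℝ) ^ (χ i)
          ≤ ∏ i ∈ Finset.univ.filter (fun i => f i ≠ 0), (d : ℝ) ^ (χ i) := by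
            apply Finset.prod_le_prod
            · intro i _; positivity
            · intro i _
              apply pow_le_pow_left₀ (by positivity)
              exact_mod_cast hle i
        _ = (d : ℝ) ^ (∑ i ∈ Finset.univ.filter (fun i => f i ≠ 0), χ i) := by
            rw [← Finset.prod_pow_eq_pow_sum]
        _ ≤ (d : ℝ) ^ (∑ i, χ i) := by
            apply pow_le_pow_right₀ (by exact_mod_cast hd)
            exact Finset.sum_le_sum_of_subset (Finset.filter_subset _ _)
    apply mul_le_mul_of_nonneg_right hfirst
    apply Finset.prod_nonneg
    intro i _
    positivity
  have hcast : (∑ i, (χ i : ℤ)) = ((∑ i, χ i : ℕ) : ℤ) := by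
    push_cast
    rfl
  calc ∑ f ∈ Finset.Nat.antidiagonalTuple (L + 1) d,
        ∏ i ∈ Finset.univ.filter (fun i => f i ≠ 0), (f i : ℝ) ^ ((χ i : ℤ) - 2)
      ≤ ∑ f ∈ Finset.Nat.antidiagonalTuple (L + 1) d, (d : ℝ) ^ (∑ i, χ i) * auxP f :=
        Finset.sum_le_sum point
    _ = (d : ℝ) ^ (∑ i, χ i) * ∑ f ∈ Finset.Nat.antidiagonalTuple (L + 1) d, auxP f := by
        rw [Finset.mul_sum]
    _ ≤ (d : ℝ) ^ (∑ i, χ i) * (8 ^ L / (d : ℝ) ^ 2) :=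
        mul_le_mul_of_nonneg_left (aux_core L d hd) (by positivity)
    _ = 8 ^ L * (d : ℝ) ^ ((∑ i, χ i : ℤ) - 2) := by
        rw [hcast]
        rw [show (((∑ i, χ i : ℕ) : ℤ) - 2) = ((∑ i, χ i : ℕ) : ℤ) + (-2) from by ring,
          zpow_add₀ hdne, zpow_natCast, aux_zpow_neg2, div_eq_mul_inv]
        ring
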